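/- Let {ψ_j}_{j=1}^m span a subspace S_m of H and let P_m g = Σ_{j=1}^m ⟨g,ψ_j⟩ψ_j. Suppose the restriction of P_m to S_m is invertible with lower frame bound c_{1,m} (i.e., ⟨P_m ψ, ψ⟩ ≥ c_{1,m}‖ψ‖² for ψ ∈ S_m) and upper bound c_{2,m}. Let T_n be a finite-dimensional subspace with D_{n,m} := (inf_{φ∈T_n,‖φ‖=1} ⟨P_m φ, φ⟩)^{-1/2} < ∞, and let θ_{n,m} be the angle between T_n and P_m(T_n). Then √(c_{1,m}) D_{n,m} ≤ sec(θ_{n,m}) ≤ √(c_{2,m}) D_{n,m}. -/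

import Mathlib

open Submodule
open scoped InnerProductSpace

variable {H : Type*}

/-- The cosine of the subspace angle `θ_{U,W}` between subspaces `U` and `W`:
`cos θ_{U,W} = inf_{u ∈ U, ‖u‖ = 1} ‖Q_W u‖`. -/
noncomputable def cosAngle [NormedAddCommGroup H] [InnerProductSpace ℂ H]
    (U W : Submodule ℂ H) [HasOrthogonalProjection W] : ℝ :=
  sInf {r : ℝ | ∃ u ∈ U, ‖u‖ = 1 ∧ r = ‖(orthogonalProjection W u : H)‖}

/-- The truncated frame operator `P_m g = Σ_{j=1}^m ⟨g,ψ_j⟩ψ_j`. -/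
noncomputable def framePm [NormedAddCommGroup H] [InnerProductSpace ℂ H] {m : ℕ}
    (ψ : Fin m → H) : H →L[ℂ] H :=
  ∑ j, ((innerSL ℂ (ψ j)).smulRight (ψ j))

section aux
variable [NormedAddCommGroup H] [InnerProductSpace ℂ H] {m : ℕ}

noncomputable def coeffVec (ψ : Fin m → H) (f : H) : EuclideanSpace ℂ (Fin m) :=
  WithLp.toLp 2 (fun j => ⟪ψ j, f⟫_ℂ)

lemma framePm_apply (ψ : Fin m → H) (f : H) :
    framePm ψ f = ∑ j, ⟪ψ j, f⟫_ℂ • ψ j := by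
  simp [framePm, ContinuousLinearMap.sum_apply]

lemma inner_framePm (ψ : Fin m → H) (f g : H) :
    ⟪f, framePm ψ g⟫_ℂ = ⟪coeffVec ψ f, coeffVec ψ g⟫_ℂ := by
  rw [framePm_apply, inner_sum]
  simp only [inner_smul_right, PiLp.inner_apply, coeffVec, WithLp.ofLp_toLp, RCLike.inner_apply]
  congr 1; funext j
  rw [← inner_conj_symm (ψ j) f, starRingEnd_self_apply]

lemma norm_coeffVec_sq (ψ : Fin m → H) (f : H) :
    ‖coeffVec ψ f‖ ^ 2 = ∑ j, ‖⟪ψ j, f⟫_ℂ‖ ^ 2 := by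
  rw [EuclideanSpace.norm_eq]
  rw [Real.sq_sqrt (by positivity)]
  rfl

lemma framePm_mem_span (ψ : Fin m → H) (f : H) :
    framePm ψ f ∈ Submodule.span ℂ (Set.range ψ) := by
  rw [framePm_apply]
  exact Submodule.sum_mem _ fun j _ =>
    Submodule.smul_mem _ _ (Submodule.subset_span ⟨j, rfl⟩)

variable {ψ : Fin m → H} {c1m c2m : ℝ}

lemma coeff_le_of_upper (hc2 : 0 < c2m)
    (hup : ∀ g ∈ Submodule.span ℂ (Set.range ψ), ∑ j, ‖⟪ψ j, g⟫_ℂ‖ ^ 2 ≤ c2m * ‖g‖ ^ 2)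
    {g : H} (hg : g ∈ Submodule.span ℂ (Set.range ψ)) :
    ‖coeffVec ψ g‖ ≤ Real.sqrt c2m * ‖g‖ := by
  have h := hup g hg
  rw [← norm_coeffVec_sq] at h
  have := Real.sqrt_le_sqrt h
  rwa [Real.sqrt_sq (norm_nonneg _), Real.sqrt_mul hc2.le, Real.sqrt_sq (norm_nonneg _)] at this

lemma le_coeff_of_lower (hc1 : 0 < c1m)
    (hlo : ∀ g ∈ Submodule.span ℂ (Set.range ψ), c1m * ‖g‖ ^ 2 ≤ ∑ j, ‖⟪ψ j, g⟫_ℂ‖ ^ 2)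
    {g : H} (hg : g ∈ Submodule.span ℂ (Set.range ψ)) :
    Real.sqrt c1m * ‖g‖ ≤ ‖coeffVec ψ g‖ := by
  have h := hlo g hg
  rw [← norm_coeffVec_sq] at h
  have := Real.sqrt_le_sqrt h
  rwa [Real.sqrt_sq (norm_nonneg _), Real.sqrt_mul hc1.le, Real.sqrt_sq (norm_nonneg _)] at this

lemma norm_framePm_le (hc2 : 0 < c2m)
    (hup : ∀ g ∈ Submodule.span ℂ (Set.range ψ), ∑ j, ‖⟪ψ j, g⟫_ℂ‖ ^ 2 ≤ c2m * ‖g‖ ^ 2)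
    (f : H) : ‖framePm ψ f‖ ≤ Real.sqrt c2m * ‖coeffVec ψ f‖ := by
  rcases eq_or_ne (framePm ψ f) 0 with h0 | h0
  · rw [h0, norm_zero]; positivity
  have key : ‖framePm ψ f‖ ^ 2 ≤ ‖coeffVec ψ (framePm ψ f)‖ * ‖coeffVec ψ f‖ := by
    have : (‖framePm ψ f‖ : ℝ) ^ 2 = RCLike.re ⟪framePm ψ f, framePm ψ f⟫_ℂ := by
      rw [inner_self_eq_norm_sq]
    rw [this, inner_framePm]
    calc RCLike.re ⟪coeffVec ψ (framePm ψ f), coeffVec ψ f⟫_ℂ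
        ≤ ‖⟪coeffVec ψ (framePm ψ f), coeffVec ψ f⟫_ℂ‖ := RCLike.re_le_norm _
      _ ≤ ‖coeffVec ψ (framePm ψ f)‖ * ‖coeffVec ψ f‖ := norm_inner_le_norm _ _
  have h2 : ‖coeffVec ψ (framePm ψ f)‖ ≤ Real.sqrt c2m * ‖framePm ψ f‖ :=
    coeff_le_of_upper hc2 hup (framePm_mem_span ψ f)
  have hpos : 0 < ‖framePm ψ f‖ := norm_pos_iff.mpr h0
  nlinarith [norm_nonneg (coeffVec ψ f)]

lemma le_norm_framePm [CompleteSpace H] (hc1 : 0 < c1m)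
    (hlo : ∀ g ∈ Submodule.span ℂ (Set.range ψ), c1m * ‖g‖ ^ 2 ≤ ∑ j, ‖⟪ψ j, g⟫_ℂ‖ ^ 2)
    (f : H) : Real.sqrt c1m * ‖coeffVec ψ f‖ ≤ ‖framePm ψ f‖ := by
  set S := Submodule.span ℂ (Set.range ψ) with hS
  haveI : FiniteDimensional ℂ S := FiniteDimensional.span_of_finite ℂ (Set.finite_range ψ)
  set g : H := (orthogonalProjection S f : H) with hgdef
  have hg : g ∈ S := (orthogonalProjection S f).2
  have hco : coeffVec ψ g = coeffVec ψ f := by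
    simp only [coeffVec]; congr 1; funext j
    have hj : ψ j ∈ S := Submodule.subset_span ⟨j, rfl⟩
    have : ⟪f - g, ψ j⟫_ℂ = 0 := starProjection_inner_eq_zero f (ψ j) hj
    have h2 : ⟪ψ j, f - g⟫_ℂ = 0 := by
      rw [← inner_conj_symm, this, map_zero]
    simp only [inner_sub_right] at h2
    have : ⟪ψ j, f⟫_ℂ = ⟪ψ j, g⟫_ℂ := by linear_combination h2
    simp [coeffVec, this]
  have hPg : framePm ψ g = framePm ψ f := by
    rw [framePm_apply, framePm_apply]
    congr 1; funext j
    have : ⟪ψ j, g⟫_ℂ = ⟪ψ j, f⟫_ℂ := congrFun (congrArg WithLp.ofLp hco) j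
    rw [this]
  rw [← hco, ← hPg]
  -- now g ∈ S
  rcases eq_or_ne (‖coeffVec ψ g‖) 0 with h0 | h0
  · rw [h0, mul_zero]; exact norm_nonneg _
  have key : ‖coeffVec ψ g‖ ^ 2 ≤ ‖g‖ * ‖framePm ψ g‖ := by
    have : (‖coeffVec ψ g‖ : ℝ) ^ 2 = RCLike.re ⟪coeffVec ψ g, coeffVec ψ g⟫_ℂ := by
      rw [inner_self_eq_norm_sq]
    rw [this, ← inner_framePm]
    calc RCLike.re ⟪g, framePm ψ g⟫_ℂ ≤ ‖⟪g, framePm ψ g⟫_ℂ‖ := RCLike.re_le_norm _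
      _ ≤ ‖g‖ * ‖framePm ψ g‖ := norm_inner_le_norm _ _
  have h2 : Real.sqrt c1m * ‖g‖ ≤ ‖coeffVec ψ g‖ := le_coeff_of_lower hc1 hlo hg
  have hpos : 0 < ‖coeffVec ψ g‖ := (norm_nonneg _).lt_of_ne' h0
  have hsc1 : 0 < Real.sqrt c1m := Real.sqrt_pos.mpr hc1
  nlinarith [norm_nonneg g, norm_nonneg (framePm ψ g)]

end aux

/-- The generalized sampling constant
`D_{n,m} = (inf_{φ ∈ T_n, ‖φ‖=1} ⟨P_m φ, φ⟩)^{-1/2}`, using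
`⟨P_m φ, φ⟩ = Σ_{j=1}^m |⟨φ,ψ_j⟩|²`. -/
noncomputable def Dconst [NormedAddCommGroup H] [InnerProductSpace ℂ H] {m : ℕ}
    (ψ : Fin m → H) (T : Submodule ℂ H) : ℝ :=
  (Real.sqrt (sInf {r : ℝ | ∃ φ ∈ T, ‖φ‖ = 1 ∧ r = ∑ j, ‖⟪ψ j, φ⟫_ℂ‖ ^ 2}))⁻¹

/-- if `{ψ_1,…,ψ_m}` has frame bounds `c_{1,m}, c_{2,m}` for `S_m = span{ψ_j}`,
and `T_n` is finite-dimensional with `D_{n,m} < ∞`, then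
`√c_{1,m} D_{n,m} ≤ sec θ_{n,m} ≤ √c_{2,m} D_{n,m}`, where `θ_{n,m}` is the angle between
`T_n` and `P_m(T_n)`. -/
theorem stmt9 [NormedAddCommGroup H] [InnerProductSpace ℂ H] [CompleteSpace H]
    {m : ℕ} (ψ : Fin m → H) (T : Submodule ℂ H) [FiniteDimensional ℂ T]
    (c1m c2m : ℝ) (hc1 : 0 < c1m) (hc2 : 0 < c2m)
    (hframe : ∀ g ∈ Submodule.span ℂ (Set.range ψ),
      c1m * ‖g‖ ^ 2 ≤ ∑ j, ‖⟪ψ j, g⟫_ℂ‖ ^ 2 ∧ ∑ j, ‖⟪ψ j, g⟫_ℂ‖ ^ 2 ≤ c2m * ‖g‖ ^ 2)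
    (hD : 0 < sInf {r : ℝ | ∃ φ ∈ T, ‖φ‖ = 1 ∧ r = ∑ j, ‖⟪ψ j, φ⟫_ℂ‖ ^ 2}) :
    Real.sqrt c1m * Dconst ψ T ≤ (cosAngle T (T.map ((framePm ψ : H →L[ℂ] H) : H →ₗ[ℂ] H)))⁻¹ ∧
    (cosAngle T (T.map ((framePm ψ : H →L[ℂ] H) : H →ₗ[ℂ] H)))⁻¹ ≤ Real.sqrt c2m * Dconst ψ T := by
  have hlo := fun g hg => (hframe g hg).1
  have hup := fun g hg => (hframe g hg).2
  set W : Submodule ℂ H := T.map ((framePm ψ : H →L[ℂ] H) : H →ₗ[ℂ] H) with hW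
  set QSet : Set ℝ := {r : ℝ | ∃ φ ∈ T, ‖φ‖ = 1 ∧ r = ∑ j, ‖⟪ψ j, φ⟫_ℂ‖ ^ 2} with hQSet
  set α : ℝ := sInf QSet with hα
  set cosSet : Set ℝ :=
    {r : ℝ | ∃ u ∈ T, ‖u‖ = 1 ∧ r = ‖(orthogonalProjection W u : H)‖} with hcosSet
  have hQbdd : BddBelow QSet := ⟨0, by rintro r ⟨φ, -, -, rfl⟩; positivity⟩
  have hQne : QSet.Nonempty := by
    by_contra h
    rw [Set.not_nonempty_iff_eq_empty] at h
    have h0 : α = 0 := by rw [hα, h, Real.sInf_empty]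
    linarith
  have hcbdd : BddBelow cosSet := ⟨0, by rintro r ⟨u, -, -, rfl⟩; positivity⟩
  have hcne : cosSet.Nonempty := by
    obtain ⟨r, φ, hφT, hφ1, -⟩ := hQne
    exact ⟨_, φ, hφT, hφ1, rfl⟩
  have hsqα : ∀ φ ∈ T, ‖φ‖ = 1 → Real.sqrt α ≤ ‖coeffVec ψ φ‖ := by
    intro φ hφT hφ1
    have hmem : ‖coeffVec ψ φ‖ ^ 2 ∈ QSet := ⟨φ, hφT, hφ1, norm_coeffVec_sq ψ φ⟩
    have := csInf_le hQbdd hmem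
    calc Real.sqrt α ≤ Real.sqrt (‖coeffVec ψ φ‖ ^ 2) := Real.sqrt_le_sqrt this
      _ = ‖coeffVec ψ φ‖ := Real.sqrt_sq (norm_nonneg _)
  have hPmem : ∀ φ ∈ T, framePm ψ φ ∈ W := by
    intro φ hφT
    exact ⟨φ, hφT, rfl⟩
  -- E1
  have E1 : ∀ φ ∈ T, ‖φ‖ = 1 →
      ‖coeffVec ψ φ‖ ≤ Real.sqrt c2m * ‖(orthogonalProjection W φ : H)‖ := by
    intro φ hφT hφ1
    set Qφ : H := (orthogonalProjection W φ : H) with hQφ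
    have horth : ⟪φ - Qφ, framePm ψ φ⟫_ℂ = 0 :=
      starProjection_inner_eq_zero φ _ (hPmem φ hφT)
    have hsub : ⟪φ, framePm ψ φ⟫_ℂ = ⟪Qφ, framePm ψ φ⟫_ℂ := by
      rw [inner_sub_left] at horth
      linear_combination horth
    have hvsq : (‖coeffVec ψ φ‖ ^ 2 : ℝ) = ‖⟪φ, framePm ψ φ⟫_ℂ‖ := by
      rw [inner_framePm, inner_self_eq_norm_sq_to_K]
      simp [norm_pow, Complex.norm_real]
    have hchain : ‖coeffVec ψ φ‖ ^ 2 ≤ Real.sqrt c2m * ‖coeffVec ψ φ‖ * ‖Qφ‖ := by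
      rw [hvsq, hsub]
      calc ‖⟪Qφ, framePm ψ φ⟫_ℂ‖ ≤ ‖Qφ‖ * ‖framePm ψ φ‖ := norm_inner_le_norm _ _
        _ ≤ ‖Qφ‖ * (Real.sqrt c2m * ‖coeffVec ψ φ‖) := by
            gcongr; exact norm_framePm_le hc2 hup φ
        _ = Real.sqrt c2m * ‖coeffVec ψ φ‖ * ‖Qφ‖ := by ring
    have hvpos : 0 < ‖coeffVec ψ φ‖ := by
      have := hsqα φ hφT hφ1
      have h1 : 0 < Real.sqrt α := Real.sqrt_pos.mpr hD
      linarith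
    nlinarith
  -- E2
  have E2 : ∀ φ ∈ T, ‖φ‖ = 1 →
      Real.sqrt c1m * ‖(orthogonalProjection W φ : H)‖ ≤ ‖coeffVec ψ φ‖ := by
    intro φ hφT hφ1
    set Qφ : H := (orthogonalProjection W φ : H) with hQφ
    obtain ⟨φ', hφ'T, hφ'eq⟩ : ∃ φ' ∈ T, framePm ψ φ' = Qφ := by
      have : Qφ ∈ W := (orthogonalProjection W φ).2
      obtain ⟨x, hx, hxe⟩ := this
      exact ⟨x, hx, hxe⟩
    have horth : ⟪φ - Qφ, Qφ⟫_ℂ = 0 :=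
      starProjection_inner_eq_zero φ _ (orthogonalProjection W φ).2
    have hQsq : (‖Qφ‖ ^ 2 : ℝ) = ‖⟪φ, Qφ⟫_ℂ‖ := by
      have h1 : ⟪φ, Qφ⟫_ℂ = ⟪Qφ, Qφ⟫_ℂ := by
        rw [inner_sub_left] at horth
        linear_combination horth
      rw [h1, inner_self_eq_norm_sq_to_K]
      simp [norm_pow, Complex.norm_real]
    have hchain : Real.sqrt c1m * ‖Qφ‖ ^ 2 ≤ ‖coeffVec ψ φ‖ * ‖Qφ‖ := by
      have h2 : ‖⟪φ, Qφ⟫_ℂ‖ ≤ ‖coeffVec ψ φ‖ * ‖coeffVec ψ φ'‖ := by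
        rw [← hφ'eq, inner_framePm]
        exact norm_inner_le_norm _ _
      have h3 : Real.sqrt c1m * ‖coeffVec ψ φ'‖ ≤ ‖Qφ‖ := by
        rw [← hφ'eq]
        exact le_norm_framePm hc1 hlo φ'
      have hs1 : (0:ℝ) ≤ Real.sqrt c1m := Real.sqrt_nonneg _
      nlinarith [norm_nonneg (coeffVec ψ φ), norm_nonneg (coeffVec ψ φ'), hQsq, h2]
    rcases eq_or_lt_of_le (norm_nonneg Qφ) with h0 | h0
    · rw [← h0, mul_zero]; exact norm_nonneg _
    nlinarith
  -- claims
  have hsc1 : 0 < Real.sqrt c1m := Real.sqrt_pos.mpr hc1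
  have hsc2 : 0 < Real.sqrt c2m := Real.sqrt_pos.mpr hc2
  have hsα : 0 < Real.sqrt α := Real.sqrt_pos.mpr hD
  have claimL : Real.sqrt α / Real.sqrt c2m ≤ cosAngle T W := by
    apply le_csInf hcne
    rintro r ⟨φ, hφT, hφ1, rfl⟩
    rw [div_le_iff₀ hsc2]
    calc Real.sqrt α ≤ ‖coeffVec ψ φ‖ := hsqα φ hφT hφ1
      _ ≤ Real.sqrt c2m * ‖(orthogonalProjection W φ : H)‖ := E1 φ hφT hφ1
      _ = ‖(orthogonalProjection W φ : H)‖ * Real.sqrt c2m := mul_comm _ _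
  have hcospos : 0 < cosAngle T W := lt_of_lt_of_le (by positivity) claimL
  have claimU : cosAngle T W ≤ Real.sqrt α / Real.sqrt c1m := by
    have hkey : (Real.sqrt c1m * cosAngle T W) ^ 2 ≤ α := by
      apply le_csInf hQne
      rintro b ⟨φ, hφT, hφ1, rfl⟩
      have h1 : cosAngle T W ≤ ‖(orthogonalProjection W φ : H)‖ :=
        csInf_le hcbdd ⟨φ, hφT, hφ1, rfl⟩
      have h2 := E2 φ hφT hφ1
      rw [← norm_coeffVec_sq]
      have h3 : Real.sqrt c1m * cosAngle T W ≤ ‖coeffVec ψ φ‖ := by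
        calc Real.sqrt c1m * cosAngle T W
            ≤ Real.sqrt c1m * ‖(orthogonalProjection W φ : H)‖ := by gcongr
          _ ≤ ‖coeffVec ψ φ‖ := h2
      have h4 : 0 ≤ Real.sqrt c1m * cosAngle T W :=
        mul_nonneg (Real.sqrt_nonneg _) hcospos.le
      nlinarith
    have := Real.sqrt_le_sqrt hkey
    rw [Real.sqrt_sq (by positivity)] at this
    rw [le_div_iff₀ hsc1]
    linarith [this, mul_comm (cosAngle T W) (Real.sqrt c1m)]
  refine ⟨?_, ?_⟩
  · have h1 : (Real.sqrt α / Real.sqrt c1m)⁻¹ ≤ (cosAngle T W)⁻¹ :=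
      inv_anti₀ hcospos claimU
    have h2 : (Real.sqrt α / Real.sqrt c1m)⁻¹ = Real.sqrt c1m * Dconst ψ T := by
      rw [Dconst, inv_div, ← hQSet, ← hα, div_eq_mul_inv]
    rw [← h2]; exact h1
  · have h1 : (cosAngle T W)⁻¹ ≤ (Real.sqrt α / Real.sqrt c2m)⁻¹ :=
      inv_anti₀ (by positivity) claimL
    have h2 : (Real.sqrt α / Real.sqrt c2m)⁻¹ = Real.sqrt c2m * Dconst ψ T := by
      rw [Dconst, inv_div, ← hQSet, ← hα, div_eq_mul_inv]
    rw [← h2] at *; exact h1
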